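/- Let σ(x) = 1/(1+e^{−x}), and for s ≥ 1 define ψ^s : ℝ → ℝ by ψ^s(x) = σ(s(x + 3/2)) − σ(s(x − 3/2)); for N ∈ ℕ, d ∈ ℕ and m ∈ {0,…,N}^d define φ^s_m : ℝ^d → ℝ by φ^s_m(x) = ∏_{l=1}^d ψ^s(3N(x_l − m_l/N)). Then for every d ∈ ℕ and k ∈ ℕ₀ there exists a constant C = C(k, d) > 0 such that for all N ∈ ℕ, all s ≥ 1, every multi-index α with |α| ≤ k and every x ∈ (0,1)^d, |D^α(1 − ∑_{m∈{0,…,N}^d} φ^s_m)(x)| ≤ C·N^k·s^k·e^{−s}. (The bump functions form an approximate partition of unity, exponentially close to an exact one in s.) -/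

import Mathlib

open scoped ContDiff

/-- Iterated partial derivative `D^α` in the directions listed in `u` (a multi-index `α`
with `|α| = u.length`). -/
noncomputable def multiDeriv {d : ℕ} : List (Fin d) → ((Fin d → ℝ) → ℝ) → ((Fin d → ℝ) → ℝ)
  | [], f => f
  | i :: u, f => fun x => fderiv ℝ (multiDeriv u f) x (Pi.single i 1)

/-- The sigmoid (logistic) function. -/
noncomputable def sigmoid (x : ℝ) : ℝ := 1 / (1 + Real.exp (-x))

lemma one_add_exp_pos (x : ℝ) : 0 < 1 + Real.exp (-x) := by positivity

lemma sigmoid_pos (x : ℝ) : 0 < sigmoid x := by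
  unfold sigmoid; positivity

lemma sigmoid_lt_one (x : ℝ) : sigmoid x < 1 := by
  unfold sigmoid
  rw [div_lt_one (one_add_exp_pos x)]
  linarith [Real.exp_pos (-x)]

lemma sigmoid_le_exp (x : ℝ) : sigmoid x ≤ Real.exp x := by
  unfold sigmoid
  rw [div_le_iff₀ (one_add_exp_pos x)]
  have h : Real.exp x * Real.exp (-x) = 1 := by
    rw [← Real.exp_add]; simp
  nlinarith [Real.exp_pos x, Real.exp_pos (-x)]

lemma one_sub_sigmoid_le (x : ℝ) : 1 - sigmoid x ≤ Real.exp (-x) := by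
  have h := one_add_exp_pos x
  unfold sigmoid
  rw [← sub_nonneg]
  have heq : Real.exp (-x) - (1 - 1 / (1 + Real.exp (-x)))
      = (Real.exp (-x))^2 / (1 + Real.exp (-x)) := by
    field_simp
    ring
  rw [heq]
  positivity

lemma hasDerivAt_sigmoid (x : ℝ) :
    HasDerivAt sigmoid (sigmoid x * (1 - sigmoid x)) x := by
  have h1 : HasDerivAt (fun x : ℝ => 1 + Real.exp (-x)) (-Real.exp (-x)) x := by
    simpa using ((Real.hasDerivAt_exp (-x)).comp x (hasDerivAt_neg x)).const_add 1
  have h2 := h1.inv (ne_of_gt (one_add_exp_pos x))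
  have : sigmoid = fun x : ℝ => (1 + Real.exp (-x))⁻¹ := by
    funext y; simp [sigmoid, one_div]
  rw [this]
  refine h2.congr_deriv ?_
  have hne := ne_of_gt (one_add_exp_pos x)
  beta_reduce
  field_simp
  ring

lemma contDiff_sigmoid' : ContDiff ℝ ∞ sigmoid := by
  have : sigmoid = fun x : ℝ => (1 + Real.exp (-x))⁻¹ := by
    funext y; simp [sigmoid, one_div]
  rw [this]
  exact (contDiff_const.add (Real.contDiff_exp.comp contDiff_neg)).inv
    fun x => ne_of_gt (one_add_exp_pos x)

lemma sigmoid_poly (n : ℕ) :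
    ∃ Q : Polynomial ℝ, ∀ y, iteratedDeriv (n + 1) sigmoid y
      = sigmoid y * (1 - sigmoid y) * Q.eval (sigmoid y) := by
  induction n with
  | zero =>
    exact ⟨1, fun y => by
      simp [iteratedDeriv_one, (hasDerivAt_sigmoid y).deriv]⟩
  | succ n ih =>
    obtain ⟨Q, hQ⟩ := ih
    set P : Polynomial ℝ := Polynomial.X * (1 - Polynomial.X) * Q with hP
    refine ⟨P.derivative, fun y => ?_⟩
    have heq : iteratedDeriv (n + 1) sigmoid = fun y => P.eval (sigmoid y) := by
      funext y; rw [hQ y]; simp [hP]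
    rw [iteratedDeriv_succ, heq]
    have h := (P.hasDerivAt (sigmoid y)).comp y (hasDerivAt_sigmoid y)
    rw [show (fun y => Polynomial.eval (sigmoid y) P)
        = (fun x => Polynomial.eval x P) ∘ sigmoid from rfl, h.deriv]
    ring

lemma sigmoid_mul_le (y : ℝ) : sigmoid y * (1 - sigmoid y) ≤ Real.exp (-|y|) := by
  rcases le_or_gt 0 y with h | h
  · rw [abs_of_nonneg h]
    calc sigmoid y * (1 - sigmoid y) ≤ 1 * (1 - sigmoid y) := by
          nlinarith [sigmoid_pos y, sigmoid_lt_one y]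
      _ ≤ Real.exp (-y) := by rw [one_mul]; exact one_sub_sigmoid_le y
  · rw [abs_of_neg h, neg_neg]
    calc sigmoid y * (1 - sigmoid y) ≤ sigmoid y * 1 := by
          nlinarith [sigmoid_pos y, sigmoid_lt_one y]
      _ ≤ Real.exp y := by rw [mul_one]; exact sigmoid_le_exp y

lemma sigmoid_deriv_bound (n : ℕ) (hn : 1 ≤ n) :
    ∃ C : ℝ, 0 < C ∧ ∀ y, |iteratedDeriv n sigmoid y| ≤ C * Real.exp (-|y|) := by
  obtain ⟨m, rfl⟩ := Nat.exists_eq_add_of_le hn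
  obtain ⟨Q, hQ⟩ := sigmoid_poly m
  refine ⟨(∑ i ∈ Finset.range (Q.natDegree + 1), |Q.coeff i|) + 1, by positivity, fun y => ?_⟩
  rw [show 1 + m = m + 1 by ring, hQ y, abs_mul]
  have h01 : sigmoid y ∈ Set.Icc (0:ℝ) 1 :=
    ⟨(sigmoid_pos y).le, (sigmoid_lt_one y).le⟩
  have hQb : |Q.eval (sigmoid y)| ≤ (∑ i ∈ Finset.range (Q.natDegree + 1), |Q.coeff i|) + 1 := by
    rw [Polynomial.eval_eq_sum_range]
    calc |∑ i ∈ Finset.range (Q.natDegree + 1), Q.coeff i * sigmoid y ^ i|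
        ≤ ∑ i ∈ Finset.range (Q.natDegree + 1), |Q.coeff i * sigmoid y ^ i| :=
          Finset.abs_sum_le_sum_abs _ _
      _ ≤ ∑ i ∈ Finset.range (Q.natDegree + 1), |Q.coeff i| := by
          refine Finset.sum_le_sum fun i _ => ?_
          rw [abs_mul]
          have : |sigmoid y ^ i| ≤ 1 := by
            rw [abs_pow]
            exact pow_le_one₀ (abs_nonneg _) (by rw [abs_of_nonneg h01.1]; exact h01.2)
          nlinarith [abs_nonneg (Q.coeff i)]
      _ ≤ (∑ i ∈ Finset.range (Q.natDegree + 1), |Q.coeff i|) + 1 :=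
          le_add_of_nonneg_right zero_le_one
  have hsm : |sigmoid y * (1 - sigmoid y)| ≤ Real.exp (-|y|) := by
    rw [abs_of_nonneg (by nlinarith [sigmoid_pos y, sigmoid_lt_one y])]
    exact sigmoid_mul_le y
  calc |sigmoid y * (1 - sigmoid y)| * |Q.eval (sigmoid y)|
      ≤ Real.exp (-|y|) * ((∑ i ∈ Finset.range (Q.natDegree + 1), |Q.coeff i|) + 1) := by
        apply mul_le_mul hsm hQb (abs_nonneg _) (Real.exp_pos _).le
    _ = _ := by ring

lemma sigmoid_deriv_bound_upto (k : ℕ) :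
    ∃ C : ℝ, 1 ≤ C ∧ ∀ n, 1 ≤ n → n ≤ k → ∀ y,
      |iteratedDeriv n sigmoid y| ≤ C * Real.exp (-|y|) := by
  induction k with
  | zero => exact ⟨1, le_refl _, fun n h1 h0 => by omega⟩
  | succ k ih =>
    obtain ⟨C, hC1, hC⟩ := ih
    obtain ⟨C', hC'0, hC'⟩ := sigmoid_deriv_bound (k + 1) (by omega)
    refine ⟨max C C', le_trans hC1 (le_max_left _ _), fun n h1 hk y => ?_⟩
    rcases Nat.lt_or_ge n (k + 1) with h | h
    · exact le_trans (hC n h1 (by omega) y)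
        (mul_le_mul_of_nonneg_right (le_max_left _ _) (Real.exp_pos _).le)
    · have : n = k + 1 := by omega
      subst this
      exact le_trans (hC' y)
        (mul_le_mul_of_nonneg_right (le_max_right _ _) (Real.exp_pos _).le)


lemma hasFDerivAt_prodEval {d : ℕ} (g : Fin d → ℝ → ℝ) (hg : ∀ l, Differentiable ℝ (g l))
    (x : Fin d → ℝ) :
    HasFDerivAt (fun y : Fin d → ℝ => ∏ l, g l (y l))
      (∑ l, (∏ j ∈ Finset.univ.erase l, g j (x j)) •
        (deriv (g l) (x l) • (ContinuousLinearMap.proj l : (Fin d → ℝ) →L[ℝ] ℝ))) x := by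
  apply HasFDerivAt.finset_prod
  intro l _
  exact ((hg l (x l)).hasDerivAt).comp_hasFDerivAt x
    ((ContinuousLinearMap.proj l : (Fin d → ℝ) →L[ℝ] ℝ).hasFDerivAt)

lemma fderiv_prodEval {d : ℕ} (g : Fin d → ℝ → ℝ) (hg : ∀ l, Differentiable ℝ (g l))
    (x : Fin d → ℝ) (i : Fin d) :
    fderiv ℝ (fun y : Fin d → ℝ => ∏ l, g l (y l)) x (Pi.single i 1)
      = deriv (g i) (x i) * ∏ j ∈ Finset.univ.erase i, g j (x j) := by
  rw [(hasFDerivAt_prodEval g hg x).fderiv]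
  rw [ContinuousLinearMap.sum_apply]
  rw [Finset.sum_eq_single i]
  · simp [mul_comm]
  · intro l _ hl
    simp [Pi.single_apply, hl.symm]
  · simp

lemma multiDeriv_prod {d : ℕ} (f : ℝ → ℝ) (hf : ContDiff ℝ ∞ f) (u : List (Fin d)) :
    multiDeriv u (fun y => ∏ l, f (y l))
      = fun x => ∏ l, iteratedDeriv (u.count l) f (x l) := by
  have hsm : ∀ n : ℕ, ContDiff ℝ ∞ (iteratedDeriv n f) := by
    intro n
    rw [iteratedDeriv_eq_iterate]
    exact hf.iterate_deriv n
  induction u with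
  | nil => simp [multiDeriv]
  | cons i u ih =>
    funext x
    show fderiv ℝ (multiDeriv u fun y => ∏ l, f (y l)) x (Pi.single i 1) = _
    rw [ih]
    rw [fderiv_prodEval _ (fun l => (hsm _).differentiable
      (by simp : (∞ : WithTop ℕ∞) ≠ 0)) x i]
    rw [← iteratedDeriv_succ, ← List.count_cons_self]
    rw [← Finset.mul_prod_erase Finset.univ _ (Finset.mem_univ i)]
    congr 1
    apply Finset.prod_congr rfl
    intro j hj
    rw [List.count_cons_of_ne (Finset.ne_of_mem_erase hj).symm]

lemma multiDeriv_one_sub {d : ℕ} (f : ℝ → ℝ) (hf : ContDiff ℝ ∞ f) (u : List (Fin d))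
    (x : Fin d → ℝ) :
    multiDeriv u (fun y => 1 - ∏ l, f (y l)) x
      = (if u = [] then 1 else 0) - multiDeriv u (fun y => ∏ l, f (y l)) x := by
  have hsm : ∀ n : ℕ, ContDiff ℝ ∞ (iteratedDeriv n f) := by
    intro n
    rw [iteratedDeriv_eq_iterate]
    exact hf.iterate_deriv n
  have hdiff : ∀ n : Fin d → ℕ, ∀ z, DifferentiableAt ℝ
      (fun y : Fin d → ℝ => ∏ l, iteratedDeriv (n l) f (y l)) z := by
    intro n z
    exact (hasFDerivAt_prodEval _ (fun l => (hsm _).differentiable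
      (by simp : (∞ : WithTop ℕ∞) ≠ 0)) z).differentiableAt
  induction u generalizing x with
  | nil => simp [multiDeriv]
  | cons i u ih =>
    show fderiv ℝ (multiDeriv u fun y => 1 - ∏ l, f (y l)) x (Pi.single i 1) = _
    have heq : (multiDeriv u fun y => 1 - ∏ l, f (y l))
        = fun z => (if u = [] then (1:ℝ) else 0)
          - (fun z => ∏ l, iteratedDeriv (u.count l) f (z l)) z := by
      funext z
      rw [ih z, multiDeriv_prod f hf]
    rw [heq]
    have hd := hdiff (fun l => u.count l) x
    have hF : HasFDerivAt
        (fun z : Fin d → ℝ => (if u = [] then (1:ℝ) else 0)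
          - (fun z => ∏ l, iteratedDeriv (u.count l) f (z l)) z)
        (-(fderiv ℝ (fun z : Fin d → ℝ => ∏ l, iteratedDeriv (u.count l) f (z l)) x)) x := by
      exact ((hasFDerivAt_const (if u = [] then (1:ℝ) else 0) x).sub hd.hasFDerivAt).congr_fderiv (zero_sub _)
    rw [hF.fderiv, ContinuousLinearMap.neg_apply]
    simp only [if_neg (List.cons_ne_nil i u), zero_sub]
    congr 1
    show _ = fderiv ℝ (multiDeriv u (fun y => ∏ l, f (y l))) x (Pi.single i 1)
    rw [multiDeriv_prod f hf]

lemma abs_one_sub_prod {ι : Type*} [DecidableEq ι] (s : Finset ι) (a : ι → ℝ) (ε : ℝ) (hε : 0 ≤ ε)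
    (h1 : ∀ i ∈ s, |1 - a i| ≤ ε) (h2 : ∀ i ∈ s, |a i| ≤ 1) :
    |1 - ∏ i ∈ s, a i| ≤ s.card * ε := by
  induction s using Finset.induction_on with
  | empty => simp
  | @insert i s hi ih =>
    rw [Finset.prod_insert hi, Finset.card_insert_of_notMem hi]
    have hprod : |∏ j ∈ s, a j| ≤ 1 := by
      rw [Finset.abs_prod]
      exact Finset.prod_le_one (fun j _ => abs_nonneg _) (fun j hj => h2 j (Finset.mem_insert_of_mem hj))
    calc |1 - a i * ∏ j ∈ s, a j|
        = |(1 - a i) + a i * (1 - ∏ j ∈ s, a j)| := by ring_nf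
      _ ≤ |1 - a i| + |a i| * |1 - ∏ j ∈ s, a j| := by
          refine le_trans (abs_add_le _ _) ?_
          rw [abs_mul]
      _ ≤ ε + 1 * (s.card * ε) := by
          have := ih (fun j hj => h1 j (Finset.mem_insert_of_mem hj))
            (fun j hj => h2 j (Finset.mem_insert_of_mem hj))
          have ha := h1 i (Finset.mem_insert_self i s)
          have hai := h2 i (Finset.mem_insert_self i s)
          have h0 : (0:ℝ) ≤ |1 - ∏ j ∈ s, a j| := abs_nonneg _
          nlinarith [abs_nonneg (a i)]
      _ = (s.card + 1) * ε := by ring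
      _ = _ := by push_cast; ring

lemma sum_count_eq_length {d : ℕ} (u : List (Fin d)) :
    ∑ l : Fin d, u.count l = u.length := by
  induction u with
  | nil => simp
  | cons i u ih =>
    simp only [List.count_cons, List.length_cons, Finset.sum_add_distrib, ih]
    simp [Finset.sum_ite_eq]

/-- The one-dimensional approximate bump `ψ^s(x) = σ(s(x+3/2)) - σ(s(x-3/2))`. -/
noncomputable def psiSig (s x : ℝ) : ℝ :=
  sigmoid (s * (x + 3 / 2)) - sigmoid (s * (x - 3 / 2))

/-- The multi-dimensional bump `φ^s_m(x) = ∏_l ψ^s(3N(x_l - m_l/N))`. -/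
noncomputable def bump (d N : ℕ) (s : ℝ) (m : Fin d → ℕ) (x : Fin d → ℝ) : ℝ :=
  ∏ l : Fin d, psiSig s (3 * (N : ℝ) * (x l - (m l : ℝ) / (N : ℝ)))

/-- The open unit cube `(0,1)^d`. -/
def unitCube (d : ℕ) : Set (Fin d → ℝ) := {x | ∀ i, x i ∈ Set.Ioo (0 : ℝ) 1}


lemma contDiff_sigshift (p : ℝ) : ContDiff ℝ ∞ (fun u : ℝ => sigmoid (u + p)) :=
  contDiff_sigmoid'.comp (contDiff_id.add contDiff_const)

lemma iteratedDeriv_sigshift (p q : ℝ) (n : ℕ) (z : ℝ) :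
    iteratedDeriv n (fun u => sigmoid (u + p) - sigmoid (u + q)) z
      = iteratedDeriv n sigmoid (z + p) - iteratedDeriv n sigmoid (z + q) := by
  have hcast : ((n : ℕ∞) : WithTop ℕ∞) ≤ ∞ := by exact_mod_cast le_top
  have hp := ((contDiff_sigshift p).of_le hcast).contDiffOn (s := Set.univ)
  have hq := ((contDiff_sigshift q).of_le hcast).contDiffOn (s := Set.univ)
  rw [show (fun u => sigmoid (u + p) - sigmoid (u + q))
      = (fun u => sigmoid (u + p)) - (fun u => sigmoid (u + q)) from rfl]
  rw [← iteratedDerivWithin_univ,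
    iteratedDerivWithin_sub (Set.mem_univ z) uniqueDiffOn_univ (hp z (Set.mem_univ z)) (hq z (Set.mem_univ z)),
    iteratedDerivWithin_univ, iteratedDerivWithin_univ,
    iteratedDeriv_comp_add_const n sigmoid p, iteratedDeriv_comp_add_const n sigmoid q]

lemma telescope (N : ℕ) (hN : 1 ≤ N) (s t : ℝ) :
    ∑ j : Fin (N + 1), psiSig s (3 * (N : ℝ) * (t - ((j : ℕ) : ℝ) / (N : ℝ)))
      = sigmoid (3 * (N : ℝ) * s * t + 3 * s / 2)
        - sigmoid (3 * (N : ℝ) * s * t + (-(3 * (N : ℝ) * s) - 3 * s / 2)) := by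
  have hN0 : (N : ℝ) ≠ 0 := (Nat.cast_pos.mpr hN).ne'
  rw [Fin.sum_univ_eq_sum_range
    (fun j : ℕ => psiSig s (3 * (N : ℝ) * (t - (j : ℝ) / (N : ℝ)))) (N + 1)]
  have hterm : ∀ j ∈ Finset.range (N + 1),
      psiSig s (3 * (N : ℝ) * (t - (j : ℝ) / (N : ℝ)))
        = (fun j : ℕ => sigmoid (3 * (N : ℝ) * s * t - 3 * s * j + 3 * s / 2)) j
          - (fun j : ℕ => sigmoid (3 * (N : ℝ) * s * t - 3 * s * j + 3 * s / 2)) (j + 1) := by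
    intro j _
    simp only
    unfold psiSig
    congr 1
    · congr 1
      field_simp
    · congr 1
      push_cast
      field_simp
      ring
  rw [Finset.sum_congr rfl hterm, Finset.sum_range_sub']
  congr 1
  · congr 1
    push_cast
    ring
  · congr 1
    push_cast
    ring

set_option maxHeartbeats 1000000 in
/-- The sigmoid bump functions form an approximate partition of unity,
exponentially close (in `s`) to an exact one: for every `d` and `k` there is
`C = C(k,d) > 0` such that for all `N ≥ 1`, `s ≥ 1`, every multi-index `α` with `|α| ≤ k`
and every `x ∈ (0,1)^d`, `|D^α (1 - ∑_{m ∈ {0,…,N}^d} φ^s_m)(x)| ≤ C N^k s^k e^{-s}`. -/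
theorem bump_partition_of_unity (d : ℕ) (hd : 0 < d) (k : ℕ) :
    ∃ C : ℝ, 0 < C ∧
      ∀ N : ℕ, 1 ≤ N → ∀ s : ℝ, 1 ≤ s →
        ∀ u : List (Fin d), u.length ≤ k → ∀ x ∈ unitCube d,
          |multiDeriv u
              (fun y => 1 - ∑ m : Fin d → Fin (N + 1),
                bump d N s (fun l => (m l : ℕ)) y) x| ≤
            C * (N : ℝ) ^ k * s ^ k * Real.exp (-s) := by
  obtain ⟨C₁, hC₁1, hC₁⟩ := sigmoid_deriv_bound_upto k
  refine ⟨(2 * C₁) ^ d * 3 ^ k + 2 * d + 1, by positivity, ?_⟩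
  intro N hN s hs u hu x hx
  have hN1 : (1 : ℝ) ≤ (N : ℝ) := Nat.one_le_cast.mpr hN
  have hc1 : (1 : ℝ) ≤ 3 * (N : ℝ) * s := by nlinarith
  have hc0 : (0 : ℝ) ≤ 3 * (N : ℝ) * s := by linarith
  set f : ℝ → ℝ := fun t => sigmoid (3 * (N : ℝ) * s * t + 3 * s / 2)
    - sigmoid (3 * (N : ℝ) * s * t + (-(3 * (N : ℝ) * s) - 3 * s / 2)) with hfdef
  -- rewrite the function as 1 - ∏ f (y l)
  have hfun : (fun y : Fin d → ℝ => 1 - ∑ m : Fin d → Fin (N + 1),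
      bump d N s (fun l => (m l : ℕ)) y) = fun y => 1 - ∏ l, f (y l) := by
    funext y
    congr 1
    have hps := Finset.prod_univ_sum (fun _ : Fin d => (Finset.univ : Finset (Fin (N + 1))))
      (fun l j => psiSig s (3 * (N : ℝ) * (y l - ((j : ℕ) : ℝ) / (N : ℝ))))
    rw [Fintype.piFinset_univ] at hps
    rw [show ∑ m : Fin d → Fin (N + 1), bump d N s (fun l => (m l : ℕ)) y
        = ∑ m : Fin d → Fin (N + 1), ∏ l,
            psiSig s (3 * (N : ℝ) * (y l - (((m l : ℕ)) : ℝ) / (N : ℝ))) from rfl,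
      ← hps]
    exact Finset.prod_congr rfl fun l _ => telescope N hN s (y l)
  rw [hfun]
  -- smoothness of f
  have hcd : ContDiff ℝ ∞ f := by
    apply ContDiff.sub
    · exact contDiff_sigmoid'.comp (((contDiff_const.mul contDiff_id)).add contDiff_const)
    · exact contDiff_sigmoid'.comp (((contDiff_const.mul contDiff_id)).add contDiff_const)
  rw [multiDeriv_one_sub f hcd u x, multiDeriv_prod f hcd]
  -- formula for iterated derivatives of f
  have hform : ∀ (n : ℕ) (t : ℝ), iteratedDeriv n f t
      = (3 * (N : ℝ) * s) ^ n * (iteratedDeriv n sigmoid (3 * (N : ℝ) * s * t + 3 * s / 2)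
        - iteratedDeriv n sigmoid (3 * (N : ℝ) * s * t + (-(3 * (N : ℝ) * s) - 3 * s / 2))) := by
    intro n t
    have hcast : ((n : ℕ∞) : WithTop ℕ∞) ≤ ∞ := by exact_mod_cast le_top
    have hF : ContDiff ℝ n (fun u : ℝ => sigmoid (u + 3 * s / 2)
        - sigmoid (u + (-(3 * (N : ℝ) * s) - 3 * s / 2))) :=
      (((contDiff_sigshift (3 * s / 2)).sub
        (contDiff_sigshift (-(3 * (N : ℝ) * s) - 3 * s / 2))).of_le hcast)
    have h1 : f = fun t => (fun u : ℝ => sigmoid (u + 3 * s / 2)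
        - sigmoid (u + (-(3 * (N : ℝ) * s) - 3 * s / 2))) (3 * (N : ℝ) * s * t) := rfl
    rw [h1, iteratedDeriv_comp_const_mul hF (3 * (N : ℝ) * s)]
    simp only [iteratedDeriv_sigshift]
  -- pointwise bounds
  have harg : ∀ t ∈ Set.Ioo (0 : ℝ) 1,
      s ≤ |3 * (N : ℝ) * s * t + 3 * s / 2|
      ∧ s ≤ |3 * (N : ℝ) * s * t + (-(3 * (N : ℝ) * s) - 3 * s / 2)| := by
    intro t ht
    obtain ⟨ht0, ht1⟩ := ht
    constructor
    · rw [abs_of_nonneg (by nlinarith)]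
      nlinarith
    · rw [abs_of_nonpos (by nlinarith)]
      nlinarith
  have hf_le_one : ∀ t : ℝ, |f t| ≤ 1 := by
    intro t
    have h1 := sigmoid_pos (3 * (N : ℝ) * s * t + 3 * s / 2)
    have h2 := sigmoid_lt_one (3 * (N : ℝ) * s * t + 3 * s / 2)
    have h3 := sigmoid_pos (3 * (N : ℝ) * s * t + (-(3 * (N : ℝ) * s) - 3 * s / 2))
    have h4 := sigmoid_lt_one (3 * (N : ℝ) * s * t + (-(3 * (N : ℝ) * s) - 3 * s / 2))
    rw [hfdef, abs_le]
    constructor <;> simp only <;> linarith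
  have hf_close : ∀ t ∈ Set.Ioo (0 : ℝ) 1, |1 - f t| ≤ 2 * Real.exp (-s) := by
    intro t ht
    obtain ⟨ha, hb⟩ := harg t ht
    obtain ⟨ht0, ht1⟩ := ht
    have ha' : 3 * (N : ℝ) * s * t + 3 * s / 2 ≥ s := by nlinarith
    have hb' : 3 * (N : ℝ) * s * t + (-(3 * (N : ℝ) * s) - 3 * s / 2) ≤ -s := by nlinarith
    have h1 : 1 - sigmoid (3 * (N : ℝ) * s * t + 3 * s / 2) ≤ Real.exp (-s) :=
      le_trans (one_sub_sigmoid_le _) (Real.exp_le_exp.mpr (by linarith))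
    have h2 : sigmoid (3 * (N : ℝ) * s * t + (-(3 * (N : ℝ) * s) - 3 * s / 2))
        ≤ Real.exp (-s) :=
      le_trans (sigmoid_le_exp _) (Real.exp_le_exp.mpr (by linarith))
    have h3 := sigmoid_lt_one (3 * (N : ℝ) * s * t + 3 * s / 2)
    have h4 := sigmoid_pos (3 * (N : ℝ) * s * t + (-(3 * (N : ℝ) * s) - 3 * s / 2))
    rw [hfdef]
    simp only
    rw [abs_of_nonneg (by linarith)]
    linarith
  have hbound : ∀ n : ℕ, 1 ≤ n → n ≤ k → ∀ t ∈ Set.Ioo (0 : ℝ) 1,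
      |iteratedDeriv n f t| ≤ 2 * C₁ * (3 * (N : ℝ) * s) ^ n * Real.exp (-s) := by
    intro n h1 h2 t ht
    obtain ⟨ha, hb⟩ := harg t ht
    rw [hform n t, abs_mul, abs_pow, abs_of_nonneg hc0]
    have hA := hC₁ n h1 h2 (3 * (N : ℝ) * s * t + 3 * s / 2)
    have hB := hC₁ n h1 h2 (3 * (N : ℝ) * s * t + (-(3 * (N : ℝ) * s) - 3 * s / 2))
    have heA : Real.exp (-|3 * (N : ℝ) * s * t + 3 * s / 2|) ≤ Real.exp (-s) :=
      Real.exp_le_exp.mpr (by linarith)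
    have heB : Real.exp (-|3 * (N : ℝ) * s * t + (-(3 * (N : ℝ) * s) - 3 * s / 2)|)
        ≤ Real.exp (-s) := Real.exp_le_exp.mpr (by linarith)
    have habs : |iteratedDeriv n sigmoid (3 * (N : ℝ) * s * t + 3 * s / 2)
        - iteratedDeriv n sigmoid (3 * (N : ℝ) * s * t
          + (-(3 * (N : ℝ) * s) - 3 * s / 2))| ≤ 2 * C₁ * Real.exp (-s) := by
      refine le_trans (abs_sub _ _) ?_
      have := Real.exp_pos (-s)
      nlinarith
    calc (3 * (N : ℝ) * s) ^ n * |iteratedDeriv n sigmoid _ - iteratedDeriv n sigmoid _|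
        ≤ (3 * (N : ℝ) * s) ^ n * (2 * C₁ * Real.exp (-s)) := by
          apply mul_le_mul_of_nonneg_left habs (by positivity)
      _ = 2 * C₁ * (3 * (N : ℝ) * s) ^ n * Real.exp (-s) := by ring
  have hNk : (1 : ℝ) ≤ (N : ℝ) ^ k := one_le_pow₀ hN1
  have hsk : (1 : ℝ) ≤ s ^ k := one_le_pow₀ hs
  have hexp := Real.exp_pos (-s)
  -- case split on u
  rcases eq_or_ne u [] with rfl | hne
  · simp only [if_pos rfl]
    have hb := abs_one_sub_prod Finset.univ (fun l => f (x l)) (2 * Real.exp (-s))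
      (by positivity) (fun l _ => hf_close (x l) (hx l)) (fun l _ => hf_le_one (x l))
    simp only [Finset.card_univ, Fintype.card_fin] at hb
    calc |1 - ∏ l, f (x l)| ≤ (d : ℝ) * (2 * Real.exp (-s)) := hb
      _ ≤ ((2 * C₁) ^ d * 3 ^ k + 2 * d + 1) * (N : ℝ) ^ k * s ^ k * Real.exp (-s) := by
          have hpow : (0:ℝ) ≤ (2 * C₁) ^ d * 3 ^ k := by positivity
          have hprod : (1:ℝ) ≤ (N : ℝ) ^ k * s ^ k := by nlinarith
          have h2 : 2 * (d:ℝ) ≤ ((2 * C₁) ^ d * 3 ^ k + 2 * d + 1) * ((N : ℝ) ^ k * s ^ k) := by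
            nlinarith
          calc (d : ℝ) * (2 * Real.exp (-s)) = (2 * (d:ℝ)) * Real.exp (-s) := by ring
            _ ≤ (((2 * C₁) ^ d * 3 ^ k + 2 * d + 1) * ((N : ℝ) ^ k * s ^ k)) * Real.exp (-s) :=
                mul_le_mul_of_nonneg_right h2 hexp.le
            _ = _ := by ring
  · -- nonempty multi-index
    obtain ⟨i₀, hi₀⟩ := List.exists_mem_of_ne_nil u hne
    have hcount₀ : 1 ≤ u.count i₀ := List.count_pos_iff.mpr hi₀
    rw [if_neg hne, zero_sub, abs_neg, Finset.abs_prod]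
    have hfac : ∀ l : Fin d, |iteratedDeriv (u.count l) f (x l)|
        ≤ 2 * C₁ * (3 * (N : ℝ) * s) ^ (u.count l)
          * (if l = i₀ then Real.exp (-s) else 1) := by
      intro l
      rcases Nat.eq_zero_or_pos (u.count l) with h0 | hpos
      · have hli : l ≠ i₀ := by
          intro h
          rw [h] at h0
          omega
        rw [h0, if_neg hli]
        simp only [pow_zero, mul_one, iteratedDeriv_zero]
        calc |f (x l)| ≤ 1 := hf_le_one (x l)
          _ ≤ 2 * C₁ * 1 := by linarith
          _ = 2 * C₁ := by ring
      · have hlek : u.count l ≤ k := le_trans List.count_le_length hu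
        have hb := hbound (u.count l) hpos hlek (x l) (hx l)
        by_cases hli : l = i₀
        · rw [if_pos hli]
          exact hb
        · rw [if_neg hli, mul_one]
          have he1 : Real.exp (-s) ≤ 1 := Real.exp_le_one_iff.mpr (by linarith)
          have hP : (0:ℝ) ≤ 2 * C₁ * (3 * (N:ℝ) * s) ^ (u.count l) :=
            mul_nonneg (by linarith) (pow_nonneg hc0 _)
          exact le_trans hb (by simpa using mul_le_mul_of_nonneg_left he1 hP)
    calc ∏ l, |iteratedDeriv (u.count l) f (x l)|
        ≤ ∏ l, (2 * C₁ * (3 * (N : ℝ) * s) ^ (u.count l)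
            * (if l = i₀ then Real.exp (-s) else 1)) :=
          Finset.prod_le_prod (fun l _ => abs_nonneg _) (fun l _ => hfac l)
      _ = (2 * C₁) ^ d * (3 * (N : ℝ) * s) ^ u.length * Real.exp (-s) := by
          rw [Finset.prod_mul_distrib, Finset.prod_mul_distrib]
          congr 1
          · congr 1
            · rw [Finset.prod_const, Finset.card_univ, Fintype.card_fin]
            · rw [Finset.prod_pow_eq_pow_sum, sum_count_eq_length]
          · simp
      _ ≤ ((2 * C₁) ^ d * 3 ^ k + 2 * d + 1) * (N : ℝ) ^ k * s ^ k * Real.exp (-s) := by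
          have hlen : (3 * (N : ℝ) * s) ^ u.length ≤ (3 * (N : ℝ) * s) ^ k :=
            pow_le_pow_right₀ hc1 hu
          have hck : (3 * (N : ℝ) * s) ^ k = 3 ^ k * (N : ℝ) ^ k * s ^ k := by
            rw [mul_pow, mul_pow]
          have h2C : (0:ℝ) ≤ (2 * C₁) ^ d := by positivity
          have hd0 : (0:ℝ) ≤ 2 * d + 1 := by positivity
          calc (2 * C₁) ^ d * (3 * (N : ℝ) * s) ^ u.length * Real.exp (-s)
              ≤ (2 * C₁) ^ d * (3 * (N : ℝ) * s) ^ k * Real.exp (-s) := by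
                apply mul_le_mul_of_nonneg_right
                  (mul_le_mul_of_nonneg_left hlen h2C) hexp.le
            _ = (2 * C₁) ^ d * 3 ^ k * ((N : ℝ) ^ k * s ^ k) * Real.exp (-s) := by
                rw [hck]; ring
            _ ≤ ((2 * C₁) ^ d * 3 ^ k + 2 * d + 1) * (N : ℝ) ^ k * s ^ k * Real.exp (-s) := by
                have hNs : (0:ℝ) ≤ (N : ℝ) ^ k * s ^ k := by positivity
                nlinarith [mul_le_mul_of_nonneg_right
                  (le_add_of_nonneg_right hd0 : (2 * C₁) ^ d * 3 ^ k
                    ≤ (2 * C₁) ^ d * 3 ^ k + (2 * d + 1)) hNs]
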